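/- arXiv:1306.0707 — 5 statements merged into one kernel-verified Lean document; each statement's English description precedes it below -/
import Mathlib

section
/- Let (u₁ᵏ)ₖ and (u₂ᵏ)ₖ be sequences of functions on a finite grid of points indexed by {0,…,N}², defined by: u₁⁰ = u₂⁰ = 0 at interior points and equal to nonnegative boundary data φ₁, φ₂ at boundary points with φ₁·φ₂ = 0; and for each interior point p, u₁^{k+1}(p) = max(-f₁(p)h²/4 + ū₁ᵏ(p) - ū₂ᵏ(p), 0) and u₂^{k+1}(p) = max(-f₂(p)h²/4 + ū₂ᵏ(p) - ū₁ᵏ(p), 0), where ūᵏ(p) denotes the average of u over the four grid neighbors of p, and f₁, f₂ ≥ 0. Then for every k ≥ 0 and every grid point p, u₁ᵏ(p) · u₂ᵏ(p) = 0. -/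
/-- Membership in the grid `{0,…,N}²`. -/
def inGrid (N : ℕ) (p : ℤ × ℤ) : Prop :=
  0 ≤ p.1 ∧ p.1 ≤ N ∧ 0 ≤ p.2 ∧ p.2 ≤ N

/-- Interior grid points. -/
def interiorPt (N : ℕ) (p : ℤ × ℤ) : Prop :=
  0 < p.1 ∧ p.1 < N ∧ 0 < p.2 ∧ p.2 < N

/-- Boundary grid points. -/
def boundaryPt (N : ℕ) (p : ℤ × ℤ) : Prop :=
  inGrid N p ∧ ¬ interiorPt N p

/-- Average over the four grid neighbours. -/
noncomputable def nbAvg (u : ℤ × ℤ → ℝ) (p : ℤ × ℤ) : ℝ :=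
  (u (p.1 - 1, p.2) + u (p.1 + 1, p.2) + u (p.1, p.2 - 1) + u (p.1, p.2 + 1)) / 4

theorem stmt_1 (N : ℕ) (hN : 2 ≤ N) (h : ℝ) (hh : 0 < h)
    (f₁ f₂ : ℤ × ℤ → ℝ) (hf₁ : ∀ p, 0 ≤ f₁ p) (hf₂ : ∀ p, 0 ≤ f₂ p)
    (φ₁ φ₂ : ℤ × ℤ → ℝ) (hφ₁ : ∀ p, 0 ≤ φ₁ p) (hφ₂ : ∀ p, 0 ≤ φ₂ p)
    (hφ : ∀ p, φ₁ p * φ₂ p = 0)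
    (u₁ u₂ : ℕ → ℤ × ℤ → ℝ)
    (hinit : ∀ p, interiorPt N p → u₁ 0 p = 0 ∧ u₂ 0 p = 0)
    (hbdry : ∀ k p, boundaryPt N p → u₁ k p = φ₁ p ∧ u₂ k p = φ₂ p)
    (hstep₁ : ∀ k p, interiorPt N p →
      u₁ (k + 1) p = max (-(f₁ p) * h ^ 2 / 4 + nbAvg (u₁ k) p - nbAvg (u₂ k) p) 0)
    (hstep₂ : ∀ k p, interiorPt N p →
      u₂ (k + 1) p = max (-(f₂ p) * h ^ 2 / 4 + nbAvg (u₂ k) p - nbAvg (u₁ k) p) 0) :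
    ∀ k p, inGrid N p → u₁ k p * u₂ k p = 0 := by
  intro k p hp
  by_cases hi : interiorPt N p
  · cases k with
    | zero =>
      obtain ⟨h1, h2⟩ := hinit p hi
      rw [h1, h2, mul_zero]
    | succ k =>
      rw [hstep₁ k p hi, hstep₂ k p hi]
      set A := -(f₁ p) * h ^ 2 / 4 + nbAvg (u₁ k) p - nbAvg (u₂ k) p with hA
      set B := -(f₂ p) * h ^ 2 / 4 + nbAvg (u₂ k) p - nbAvg (u₁ k) p with hB
      have hAB : A + B ≤ 0 := by
        have h1 := hf₁ p
        have h2 := hf₂ p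
        have hsq : (0:ℝ) ≤ h ^ 2 := sq_nonneg h
        rw [hA, hB]
        nlinarith [mul_nonneg h1 hsq, mul_nonneg h2 hsq]
      rcases le_or_gt A 0 with hA0 | hA0
      · rw [max_eq_right hA0, zero_mul]
      · have hB0 : B ≤ 0 := by linarith
        rw [max_eq_right hB0, mul_zero]
  · obtain ⟨h1, h2⟩ := hbdry k p ⟨hp, hi⟩
    rw [h1, h2, hφ p]
end

section
/- Under the iterative segregation scheme with f₁, f₂ ≥ 0 and nonnegative boundary data φ₁, φ₂, for every k ≥ 0 and every grid point p one has 0 ≤ u₁ᵏ(p) ≤ max_{q ∈ ∂𝒩} φ₁(q) and 0 ≤ u₂ᵏ(p) ≤ max_{q ∈ ∂𝒩} φ₂(q). -/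
lemma nbAvg_bounds (N : ℕ) (u : ℤ × ℤ → ℝ) (M : ℝ)
    (hu : ∀ q, inGrid N q → 0 ≤ u q ∧ u q ≤ M) (p : ℤ × ℤ) (hp : interiorPt N p) :
    0 ≤ nbAvg u p ∧ nbAvg u p ≤ M := by
  obtain ⟨a, b, c, d⟩ := hp
  have h1 := hu (p.1 - 1, p.2) ⟨by omega, by omega, by omega, by omega⟩
  have h2 := hu (p.1 + 1, p.2) ⟨by omega, by omega, by omega, by omega⟩
  have h3 := hu (p.1, p.2 - 1) ⟨by omega, by omega, by omega, by omega⟩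
  have h4 := hu (p.1, p.2 + 1) ⟨by omega, by omega, by omega, by omega⟩
  unfold nbAvg
  constructor
  · linarith [h1.1, h2.1, h3.1, h4.1]
  · linarith [h1.2, h2.2, h3.2, h4.2]

theorem stmt_4 (N : ℕ) (hN : 2 ≤ N) (h : ℝ) (hh : 0 < h)
    (f₁ f₂ : ℤ × ℤ → ℝ) (hf₁ : ∀ p, 0 ≤ f₁ p) (hf₂ : ∀ p, 0 ≤ f₂ p)
    (φ₁ φ₂ : ℤ × ℤ → ℝ) (hφ₁ : ∀ p, 0 ≤ φ₁ p) (hφ₂ : ∀ p, 0 ≤ φ₂ p)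
    (hφ : ∀ p, φ₁ p * φ₂ p = 0)
    (u₁ u₂ : ℕ → ℤ × ℤ → ℝ)
    (hinit : ∀ p, interiorPt N p → u₁ 0 p = 0 ∧ u₂ 0 p = 0)
    (hbdry : ∀ k p, boundaryPt N p → u₁ k p = φ₁ p ∧ u₂ k p = φ₂ p)
    (hstep₁ : ∀ k p, interiorPt N p →
      u₁ (k + 1) p = max (-(f₁ p) * h ^ 2 / 4 + nbAvg (u₁ k) p - nbAvg (u₂ k) p) 0)
    (hstep₂ : ∀ k p, interiorPt N p →
      u₂ (k + 1) p = max (-(f₂ p) * h ^ 2 / 4 + nbAvg (u₂ k) p - nbAvg (u₁ k) p) 0) :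
    ∀ k p, inGrid N p →
      (0 ≤ u₁ k p ∧ u₁ k p ≤ sSup (φ₁ '' {q | boundaryPt N q})) ∧
      (0 ≤ u₂ k p ∧ u₂ k p ≤ sSup (φ₂ '' {q | boundaryPt N q})) := by
  have hbd0 : boundaryPt N (0, 0) := by
    refine ⟨⟨le_refl _, by positivity, le_refl _, by positivity⟩, ?_⟩
    rintro ⟨h1, -, -, -⟩
    exact lt_irrefl _ h1
  have hSfin : {q | boundaryPt N q}.Finite := by
    apply Set.Finite.subset (Set.finite_Icc ((0 : ℤ), (0 : ℤ)) ((N : ℤ), (N : ℤ)))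
    rintro q ⟨⟨a, b, c, d⟩, -⟩
    exact ⟨⟨a, c⟩, ⟨b, d⟩⟩
  have hbdd1 : BddAbove (φ₁ '' {q | boundaryPt N q}) := (hSfin.image _).bddAbove
  have hbdd2 : BddAbove (φ₂ '' {q | boundaryPt N q}) := (hSfin.image _).bddAbove
  set M₁ := sSup (φ₁ '' {q | boundaryPt N q}) with hM₁
  set M₂ := sSup (φ₂ '' {q | boundaryPt N q}) with hM₂
  have hle1 : ∀ q, boundaryPt N q → φ₁ q ≤ M₁ := fun q hq => le_csSup hbdd1 ⟨q, hq, rfl⟩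
  have hle2 : ∀ q, boundaryPt N q → φ₂ q ≤ M₂ := fun q hq => le_csSup hbdd2 ⟨q, hq, rfl⟩
  have hM₁0 : 0 ≤ M₁ := le_trans (hφ₁ (0, 0)) (hle1 _ hbd0)
  have hM₂0 : 0 ≤ M₂ := le_trans (hφ₂ (0, 0)) (hle2 _ hbd0)
  intro k
  induction k with
  | zero =>
    intro p hp
    by_cases hip : interiorPt N p
    · obtain ⟨e1, e2⟩ := hinit p hip
      exact ⟨⟨by rw [e1], by rw [e1]; exact hM₁0⟩, ⟨by rw [e2], by rw [e2]; exact hM₂0⟩⟩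
    · obtain ⟨e1, e2⟩ := hbdry 0 p ⟨hp, hip⟩
      exact ⟨⟨by rw [e1]; exact hφ₁ p, by rw [e1]; exact hle1 p ⟨hp, hip⟩⟩,
             ⟨by rw [e2]; exact hφ₂ p, by rw [e2]; exact hle2 p ⟨hp, hip⟩⟩⟩
  | succ k ih =>
    intro p hp
    by_cases hip : interiorPt N p
    · have hb1 := nbAvg_bounds N (u₁ k) M₁ (fun q hq => (ih q hq).1) p hip
      have hb2 := nbAvg_bounds N (u₂ k) M₂ (fun q hq => (ih q hq).2) p hip
      have hf1 : 0 ≤ f₁ p * h ^ 2 / 4 := div_nonneg (mul_nonneg (hf₁ p) (sq_nonneg h)) (by norm_num)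
      have hf2 : 0 ≤ f₂ p * h ^ 2 / 4 := div_nonneg (mul_nonneg (hf₂ p) (sq_nonneg h)) (by norm_num)
      rw [hstep₁ k p hip, hstep₂ k p hip]
      refine ⟨⟨le_max_right _ _, ?_⟩, ⟨le_max_right _ _, ?_⟩⟩
      · apply max_le _ hM₁0
        have := hb1.2; have := hb2.1
        linarith
      · apply max_le _ hM₂0
        have := hb2.2; have := hb1.1
        linarith
    · obtain ⟨e1, e2⟩ := hbdry (k + 1) p ⟨hp, hip⟩
      exact ⟨⟨by rw [e1]; exact hφ₁ p, by rw [e1]; exact hle1 p ⟨hp, hip⟩⟩,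
             ⟨by rw [e2]; exact hφ₂ p, by rw [e2]; exact hle2 p ⟨hp, hip⟩⟩⟩
end

section
/- In the one-dimensional segregation algorithm, the sequence vᵏ = (u₁ᵏ(x₁) - u₂ᵏ(x₁), …, u₁ᵏ(x_{N-1}) - u₂ᵏ(x_{N-1})) converges in ℝ^{N-1} as k → ∞. -/
noncomputable def avg1 (u : ℕ → ℝ) (i : ℕ) : ℝ := (u (i - 1) + u (i + 1)) / 2

lemma lip_aux (a b c₁ c₂ : ℝ) (h1 : 0 ≤ c₁) (h2 : 0 ≤ c₂) :
    |(max (a - c₁) 0 - max (-a - c₂) 0) - (max (b - c₁) 0 - max (-b - c₂) 0)| ≤ |a - b| := by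
  rcases max_cases (a - c₁) (0:ℝ) with ⟨e1, l1⟩ | ⟨e1, l1⟩ <;>
  rcases max_cases (b - c₁) (0:ℝ) with ⟨e2, l2⟩ | ⟨e2, l2⟩ <;>
  rcases max_cases (-a - c₂) (0:ℝ) with ⟨e3, l3⟩ | ⟨e3, l3⟩ <;>
  rcases max_cases (-b - c₂) (0:ℝ) with ⟨e4, l4⟩ | ⟨e4, l4⟩ <;>
  rw [e1, e2, e3, e4, abs_sub_le_iff] <;>
  exact ⟨by linarith [le_abs_self (a - b), neg_abs_le (a - b)],
         by linarith [le_abs_self (a - b), neg_abs_le (a - b)]⟩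

/-- Discrete maximum-principle decay: a nonnegative quantity with zero boundary values
whose iterates are dominated by neighbor averages decays geometrically. -/
lemma geom_decay (N : ℕ) (hN : 2 ≤ N) (E : ℕ → ℕ → ℝ)
    (hE0 : ∀ k, E k 0 = 0) (hEN : ∀ k, E k N = 0)
    (hrec : ∀ k i, 1 ≤ i → i ≤ N - 1 → E (k + 1) i ≤ (E k (i - 1) + E k (i + 1)) / 2) :
    ∃ ρ : ℝ, ρ < 1 ∧ ∀ i, 1 ≤ i → i ≤ N - 1 → ∃ Ci : ℝ, ∀ k, E k i ≤ Ci * ρ ^ k := by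
  have hNpos : (0:ℝ) < N := by
    have : (2:ℝ) ≤ N := by exact_mod_cast hN
    linarith
  have hN0 : (N:ℝ) ≠ 0 := ne_of_gt hNpos
  set s : ℕ → ℝ := fun i => Real.sin (Real.pi * i / N) with hs
  set ρ : ℝ := Real.cos (Real.pi / N) with hρ
  have hpi := Real.pi_pos
  have hs0 : s 0 = 0 := by simp [hs]
  have hsN : s N = 0 := by
    simp only [hs]
    rw [mul_div_assoc, div_self hN0, mul_one, Real.sin_pi]
  have hspos : ∀ i, 1 ≤ i → i ≤ N - 1 → 0 < s i := by
    intro i h1 h2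
    have hiN : (i:ℝ) < N := by exact_mod_cast (by omega : i < N)
    have hi1 : (1:ℝ) ≤ (i:ℝ) := by exact_mod_cast h1
    apply Real.sin_pos_of_pos_of_lt_pi
    · apply div_pos (by nlinarith) hNpos
    · rw [div_lt_iff₀ hNpos]; nlinarith
  have hρ0 : 0 ≤ ρ := by
    apply Real.cos_nonneg_of_mem_Icc
    constructor
    · have : 0 < Real.pi / N := by positivity
      linarith
    · rw [div_le_div_iff₀ hNpos (by norm_num : (0:ℝ) < 2)]
      have : (2:ℝ) ≤ N := by exact_mod_cast hN
      nlinarith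
  have hsinρ : 0 < Real.sin (Real.pi / N) := by
    apply Real.sin_pos_of_pos_of_lt_pi (by positivity)
    rw [div_lt_iff₀ hNpos]
    have : (2:ℝ) ≤ N := by exact_mod_cast hN
    nlinarith
  have hρ1 : ρ < 1 := by
    have := Real.sin_sq_add_cos_sq (Real.pi / N)
    nlinarith
  have hid : ∀ i : ℕ, 1 ≤ i → s (i - 1) + s (i + 1) = 2 * ρ * s i := by
    intro i h1
    simp only [hs, hρ]
    have hc : ((i - 1 : ℕ) : ℝ) = (i : ℝ) - 1 := by
      rw [Nat.cast_sub h1]; norm_num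
    rw [hc]
    push_cast
    rw [show Real.pi * ((i:ℝ) - 1) / N = Real.pi * i / N - Real.pi / N by ring,
        show Real.pi * ((i:ℝ) + 1) / N = Real.pi * i / N + Real.pi / N by ring,
        Real.sin_sub, Real.sin_add]
    ring
  have hne : (Finset.Icc 1 (N - 1)).Nonempty := ⟨1, by simp [Finset.mem_Icc]; omega⟩
  set C : ℝ := (Finset.Icc 1 (N - 1)).sup' hne (fun i => E 0 i / s i) with hC
  have hC0 : ∀ i, 1 ≤ i → i ≤ N - 1 → E 0 i ≤ C * s i := by
    intro i h1 h2
    have hmem : i ∈ Finset.Icc 1 (N - 1) := by simp [Finset.mem_Icc]; omega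
    have hle : E 0 i / s i ≤ C := by rw [hC]; exact Finset.le_sup' (fun j => E 0 j / s j) hmem
    have hsp := hspos i h1 h2
    rw [div_le_iff₀ hsp] at hle
    linarith
  have main : ∀ k i, i ≤ N → E k i ≤ C * ρ ^ k * s i := by
    intro k
    induction k with
    | zero =>
      intro i hiN
      by_cases hi : 1 ≤ i ∧ i ≤ N - 1
      · have := hC0 i hi.1 hi.2
        simpa using this
      · have : i = 0 ∨ i = N := by omega
        rcases this with rfl | rfl
        · simp [hE0, hs0]
        · simp [hEN, hsN]
    | succ k ih =>
      intro i hiN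
      by_cases hi : 1 ≤ i ∧ i ≤ N - 1
      · obtain ⟨h1, h2⟩ := hi
        have b1 := ih (i - 1) (by omega)
        have b2 := ih (i + 1) (by omega)
        have hr := hrec k i h1 h2
        have hidd := hid i h1
        calc E (k + 1) i ≤ (E k (i - 1) + E k (i + 1)) / 2 := hr
          _ ≤ (C * ρ ^ k * s (i - 1) + C * ρ ^ k * s (i + 1)) / 2 := by linarith
          _ = C * ρ ^ k * ((s (i - 1) + s (i + 1)) / 2) := by ring
          _ = C * ρ ^ (k + 1) * s i := by rw [hidd]; ring
      · have : i = 0 ∨ i = N := by omega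
        rcases this with rfl | rfl
        · simp [hE0, hs0]
        · simp [hEN, hsN]
  refine ⟨ρ, hρ1, fun i h1 h2 => ⟨C * s i, fun k => ?_⟩⟩
  have := main k i (by omega)
  linarith [this, mul_comm (C * ρ ^ k) (s i)]

theorem stmt_12 (N : ℕ) (hN : 2 ≤ N) (h : ℝ) (hh : 0 < h)
    (f₁ f₂ : ℕ → ℝ) (hf₁ : ∀ i, 0 ≤ f₁ i) (hf₂ : ∀ i, 0 ≤ f₂ i)
    (φ₁ φ₂ : ℕ → ℝ) (hφ₁ : ∀ i, 0 ≤ φ₁ i) (hφ₂ : ∀ i, 0 ≤ φ₂ i)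
    (hφ0 : φ₁ 0 * φ₂ 0 = 0) (hφN : φ₁ N * φ₂ N = 0)
    (u₁ u₂ : ℕ → ℕ → ℝ)
    (hbdry : ∀ k, u₁ k 0 = φ₁ 0 ∧ u₂ k 0 = φ₂ 0 ∧ u₁ k N = φ₁ N ∧ u₂ k N = φ₂ N)
    (hinit : ∀ i, 1 ≤ i → i ≤ N - 1 → u₁ 0 i = 0 ∧ u₂ 0 i = 0)
    (hstep₁ : ∀ k i, 1 ≤ i → i ≤ N - 1 →
      u₁ (k + 1) i = max (-(f₁ i) * h ^ 2 / 2 + avg1 (u₁ k) i - avg1 (u₂ k) i) 0)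
    (hstep₂ : ∀ k i, 1 ≤ i → i ≤ N - 1 →
      u₂ (k + 1) i = max (-(f₂ i) * h ^ 2 / 2 + avg1 (u₂ k) i - avg1 (u₁ k) i) 0) :
    ∃ L : ℕ → ℝ, ∀ i, 1 ≤ i → i ≤ N - 1 →
      Filter.Tendsto (fun k => u₁ k i - u₂ k i) Filter.atTop (nhds (L i)) := by
  classical
  set w : ℕ → ℕ → ℝ := fun k i => u₁ k i - u₂ k i with hw
  set E : ℕ → ℕ → ℝ := fun k i => |w (k + 1) i - w k i| with hE
  have havg : ∀ v v' : ℕ → ℝ, ∀ i, avg1 v i - avg1 v' i = avg1 (fun j => v j - v' j) i := by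
    intro v v' i; simp only [avg1]; ring
  have hrec : ∀ k i, 1 ≤ i → i ≤ N - 1 →
      w (k + 1) i = max (avg1 (w k) i - f₁ i * h ^ 2 / 2) 0
                  - max (-(avg1 (w k) i) - f₂ i * h ^ 2 / 2) 0 := by
    intro k i h1 h2
    have e1 := hstep₁ k i h1 h2
    have e2 := hstep₂ k i h1 h2
    have ha : avg1 (u₁ k) i - avg1 (u₂ k) i = avg1 (w k) i := by
      rw [havg]
    simp only [hw]
    rw [e1, e2,
      show -(f₁ i) * h ^ 2 / 2 + avg1 (u₁ k) i - avg1 (u₂ k) i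
        = avg1 (w k) i - f₁ i * h ^ 2 / 2 by rw [← ha]; ring,
      show -(f₂ i) * h ^ 2 / 2 + avg1 (u₂ k) i - avg1 (u₁ k) i
        = -(avg1 (w k) i) - f₂ i * h ^ 2 / 2 by have := ha; linarith]
  have hb : ∀ k, w k 0 = φ₁ 0 - φ₂ 0 ∧ w k N = φ₁ N - φ₂ N := by
    intro k
    obtain ⟨a, b, c, d⟩ := hbdry k
    exact ⟨by simp only [hw]; rw [a, b], by simp only [hw]; rw [c, d]⟩
  have hE0 : ∀ k, E k 0 = 0 := by
    intro k; simp only [hE]; rw [(hb (k + 1)).1, (hb k).1]; simp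
  have hEN : ∀ k, E k N = 0 := by
    intro k; simp only [hE]; rw [(hb (k + 1)).2, (hb k).2]; simp
  have hErec : ∀ k i, 1 ≤ i → i ≤ N - 1 → E (k + 1) i ≤ (E k (i - 1) + E k (i + 1)) / 2 := by
    intro k i h1 h2
    have hc1 : (0:ℝ) ≤ f₁ i * h ^ 2 / 2 := by
      have := mul_nonneg (hf₁ i) (sq_nonneg h); linarith
    have hc2 : (0:ℝ) ≤ f₂ i * h ^ 2 / 2 := by
      have := mul_nonneg (hf₂ i) (sq_nonneg h); linarith
    have key := lip_aux (avg1 (w (k + 1)) i) (avg1 (w k) i) (f₁ i * h ^ 2 / 2)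
      (f₂ i * h ^ 2 / 2) hc1 hc2
    have h3 : E (k + 1) i
        = |(max (avg1 (w (k + 1)) i - f₁ i * h ^ 2 / 2) 0
            - max (-(avg1 (w (k + 1)) i) - f₂ i * h ^ 2 / 2) 0)
          - (max (avg1 (w k) i - f₁ i * h ^ 2 / 2) 0
            - max (-(avg1 (w k) i) - f₂ i * h ^ 2 / 2) 0)| := by
      simp only [hE]
      rw [hrec (k + 1) i h1 h2, hrec k i h1 h2]
    have h4 : avg1 (w (k + 1)) i - avg1 (w k) i
        = (w (k + 1) (i - 1) - w k (i - 1) + (w (k + 1) (i + 1) - w k (i + 1))) / 2 := by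
      simp only [avg1]; ring
    have habs := abs_add_le (w (k + 1) (i - 1) - w k (i - 1)) (w (k + 1) (i + 1) - w k (i + 1))
    calc E (k + 1) i ≤ |avg1 (w (k + 1)) i - avg1 (w k) i| := by rw [h3]; exact key
      _ = |w (k + 1) (i - 1) - w k (i - 1) + (w (k + 1) (i + 1) - w k (i + 1))| / 2 := by
          rw [h4, abs_div]; norm_num
      _ ≤ (E k (i - 1) + E k (i + 1)) / 2 := by
          simp only [hE]; linarith
  obtain ⟨ρ, hρ1, hdecay⟩ := geom_decay N hN E hE0 hEN hErec
  have key : ∀ i, ∃ l : ℝ, 1 ≤ i → i ≤ N - 1 →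
      Filter.Tendsto (fun k => u₁ k i - u₂ k i) Filter.atTop (nhds l) := by
    intro i
    by_cases hi : 1 ≤ i ∧ i ≤ N - 1
    · obtain ⟨h1, h2⟩ := hi
      obtain ⟨Ci, hCi⟩ := hdecay i h1 h2
      have hcauchy : CauchySeq (fun k => u₁ k i - u₂ k i) := by
        have heq : (fun k => u₁ k i - u₂ k i) = fun k => w k i := by
          funext k; simp only [hw]
        rw [heq]
        apply cauchySeq_of_le_geometric ρ Ci hρ1
        intro n
        rw [dist_comm, Real.dist_eq]
        exact hCi n
      obtain ⟨l, hl⟩ := cauchySeq_tendsto_of_complete hcauchy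
      exact ⟨l, fun _ _ => hl⟩
    · exact ⟨0, fun a b => absurd ⟨a, b⟩ hi⟩
  choose L hL using key
  exact ⟨L, hL⟩
end

section
/- At a fixed point of the one-dimensional scheme: if u₁(xᵢ) > 0 (so u₂(xᵢ) = 0 and v(xᵢ) = u₁(xᵢ)), then the discrete Laplacian satisfies Δ_h v(xᵢ) = (v(x_{i-1}) - 2v(xᵢ) + v(x_{i+1}))/h² = f₁(xᵢ). -/
theorem stmt_13 (h : ℝ) (hh : 0 < h) (f₁ f₂ u₁ u₂ : ℕ → ℝ) (i : ℕ) (hi : 1 ≤ i)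
    (hfix₁ : u₁ i = max (-(f₁ i) * h ^ 2 / 2 + avg1 u₁ i - avg1 u₂ i) 0)
    (hfix₂ : u₂ i = max (-(f₂ i) * h ^ 2 / 2 + avg1 u₂ i - avg1 u₁ i) 0)
    (hprod : u₁ i * u₂ i = 0)
    (hpos : 0 < u₁ i) :
    ((u₁ (i - 1) - u₂ (i - 1)) - 2 * (u₁ i - u₂ i) + (u₁ (i + 1) - u₂ (i + 1))) / h ^ 2
      = f₁ i := by
  have hu2 : u₂ i = 0 := by
    rcases mul_eq_zero.mp hprod with h1 | h2
    · exact absurd h1 (ne_of_gt hpos)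
    · exact h2
  have heq : u₁ i = -(f₁ i) * h ^ 2 / 2 + avg1 u₁ i - avg1 u₂ i := by
    rcases max_cases (-(f₁ i) * h ^ 2 / 2 + avg1 u₁ i - avg1 u₂ i) 0 with ⟨e, _⟩ | ⟨e, _⟩
    · rw [hfix₁, e]
    · rw [hfix₁, e] at hpos; exact absurd hpos (lt_irrefl 0)
  have hne : h ^ 2 ≠ 0 := pow_ne_zero 2 (ne_of_gt hh)
  unfold avg1 at heq
  field_simp
  nlinarith [heq, hu2]
end

section
/- At a fixed point of the one-dimensional scheme: if u₁(xᵢ) = u₂(xᵢ) = 0, then -f₂(xᵢ) ≤ Δ_h v(xᵢ) ≤ f₁(xᵢ), where v = u₁ - u₂ and Δ_h v(xᵢ) = (v(x_{i-1}) - 2v(xᵢ) + v(x_{i+1}))/h². -/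
theorem stmt_14 (h : ℝ) (hh : 0 < h) (f₁ f₂ u₁ u₂ : ℕ → ℝ) (i : ℕ) (hi : 1 ≤ i)
    (hfix₁ : u₁ i = max (-(f₁ i) * h ^ 2 / 2 + avg1 u₁ i - avg1 u₂ i) 0)
    (hfix₂ : u₂ i = max (-(f₂ i) * h ^ 2 / 2 + avg1 u₂ i - avg1 u₁ i) 0)
    (h₁ : u₁ i = 0) (h₂ : u₂ i = 0) :
    -f₂ i ≤ ((u₁ (i - 1) - u₂ (i - 1)) - 2 * (u₁ i - u₂ i)
        + (u₁ (i + 1) - u₂ (i + 1))) / h ^ 2 ∧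
    ((u₁ (i - 1) - u₂ (i - 1)) - 2 * (u₁ i - u₂ i)
        + (u₁ (i + 1) - u₂ (i + 1))) / h ^ 2 ≤ f₁ i := by
  rw [h₁] at hfix₁
  rw [h₂] at hfix₂
  have e₁ : -(f₁ i) * h ^ 2 / 2 + avg1 u₁ i - avg1 u₂ i ≤ 0 :=
    max_eq_right_iff.mp hfix₁.symm
  have e₂ : -(f₂ i) * h ^ 2 / 2 + avg1 u₂ i - avg1 u₁ i ≤ 0 :=
    max_eq_right_iff.mp hfix₂.symm
  unfold avg1 at e₁ e₂
  have hh2 : (0:ℝ) < h ^ 2 := by positivity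
  rw [h₁, h₂]
  constructor
  · rw [le_div_iff₀ hh2]; nlinarith
  · rw [div_le_iff₀ hh2]; nlinarith
end
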